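/- The distortion D(Λ,Q) of the uniformly quantized Laplace source is monotonically nondecreasing in Q for fixed Λ > 0, with 0 < D(Λ,Q) < 2/Λ² for all Q > 0. -/

import Mathlib

/-- Closed-form distortion of the uniformly quantized Laplace(Λ) source. -/
noncomputable def quantLaplaceDist (Λ Q : ℝ) : ℝ :=
  (2 - (1 / 4) * Real.exp (-Λ * Q / 2) * (Λ ^ 2 * Q ^ 2 + 4 * (Λ * Q) + 8)) / Λ ^ 2
    + ((-(Λ * Q) * (Λ * Q + 4) + Real.exp (Λ * Q) * ((Λ * Q) * (Λ * Q - 4) + 8) - 8)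
          / (4 * Λ ^ 2))
        * (Real.exp (-(3 / 2) * (Λ * Q)) / (1 - Real.exp (-Λ * Q)))

lemma quantLaplaceDist_eq (Λ Q : ℝ) (hΛ : 0 < Λ) (hQ : 0 < Q) :
    quantLaplaceDist Λ Q = (2 - Λ * Q / Real.sinh (Λ * Q / 2)) / Λ ^ 2 := by
  have hx : 0 < Λ * Q := mul_pos hΛ hQ
  set u := Real.exp (Λ * Q / 2) with hu_def
  have hu : 1 < u := by
    rw [hu_def]
    exact Real.one_lt_exp_iff.mpr (half_pos hx)
  have hu0 : 0 < u := lt_trans one_pos hu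
  have e1 : Real.exp (-(Λ * Q) / 2) = u⁻¹ := by
    rw [hu_def, ← Real.exp_neg]; congr 1; ring
  have e2 : Real.exp (Λ * Q) = u ^ 2 := by
    rw [hu_def, sq, ← Real.exp_add]; congr 1; ring
  have e3 : Real.exp (-(3 / 2) * (Λ * Q)) = (u ^ 3)⁻¹ := by
    rw [hu_def, ← Real.exp_nat_mul, ← Real.exp_neg]
    congr 1; push_cast; ring
  have e4 : Real.exp (-(Λ * Q)) = (u ^ 2)⁻¹ := by
    rw [hu_def, ← Real.exp_nat_mul, ← Real.exp_neg]
    congr 1; push_cast; ring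
  have esinh : Real.sinh (Λ * Q / 2) = (u - u⁻¹) / 2 := by
    rw [Real.sinh_eq, hu_def, ← Real.exp_neg]
  have h1 : 1 - Real.exp (-(Λ * Q)) ≠ 0 := by
    rw [e4]
    have : (u ^ 2)⁻¹ < 1 := by
      rw [inv_lt_one_iff₀]; right; nlinarith
    linarith
  have hsne : u - u⁻¹ ≠ 0 := by
    have : u⁻¹ < 1 := by rw [inv_lt_one_iff₀]; right; exact hu
    nlinarith
  have h1' : 1 - (u ^ 2)⁻¹ ≠ 0 := by rw [e4] at h1; exact h1
  have h2 : u ^ 2 - 1 ≠ 0 := by nlinarith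
  rw [quantLaplaceDist, neg_mul, e1, e2, e3, e4, esinh]
  have h2' : (-1 : ℝ) + u ^ 2 ≠ 0 := by nlinarith
  field_simp [h2, h2']
  ring

lemma sinh_lt_mul_cosh {x : ℝ} (hx : 0 < x) : Real.sinh x < x * Real.cosh x := by
  have h : StrictMonoOn (fun t : ℝ => t * Real.cosh t - Real.sinh t) (Set.Ici 0) := by
    apply strictMonoOn_of_deriv_pos (convex_Ici 0)
    · fun_prop
    · intro t ht
      rw [interior_Ici] at ht
      have hd : HasDerivAt (fun t : ℝ => t * Real.cosh t - Real.sinh t)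
          (1 * Real.cosh t + t * Real.sinh t - Real.cosh t) t :=
        ((hasDerivAt_id t).mul (Real.hasDerivAt_cosh t)).sub (Real.hasDerivAt_sinh t)
      rw [hd.deriv]
      have ht' := Set.mem_Ioi.1 ht
      have := Real.sinh_pos_iff.2 ht'
      nlinarith [mul_pos ht' this]
  have := h Set.self_mem_Ici (Set.mem_Ici.2 hx.le) hx
  simpa using this

lemma aux_strictMono : StrictMonoOn (fun x : ℝ => 2 - x / Real.sinh (x / 2)) (Set.Ioi 0) := by
  apply strictMonoOn_of_deriv_pos (convex_Ioi 0)
  · apply ContinuousOn.sub continuousOn_const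
    apply ContinuousOn.div continuousOn_id (by fun_prop)
    intro x hx
    exact (Real.sinh_pos_iff.2 (half_pos hx)).ne'
  · intro x hx
    rw [interior_Ioi] at hx
    have hs : 0 < Real.sinh (x / 2) := Real.sinh_pos_iff.2 (half_pos hx)
    have hd : HasDerivAt (fun x : ℝ => 2 - x / Real.sinh (x / 2))
        (-((1 * Real.sinh (x / 2) - x * (Real.cosh (x / 2) * (1 / 2))) / Real.sinh (x / 2) ^ 2)) x := by
      apply HasDerivAt.const_sub
      exact (hasDerivAt_id x).div
        (((hasDerivAt_id' x).div_const 2).sinh) hs.ne'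
    rw [hd.deriv]
    have hkey : Real.sinh (x / 2) < (x / 2) * Real.cosh (x / 2) := sinh_lt_mul_cosh (half_pos hx)
    have h1 : 0 < x * (Real.cosh (x / 2) * (1 / 2)) - 1 * Real.sinh (x / 2) := by nlinarith
    have h2 : (0:ℝ) < Real.sinh (x / 2) ^ 2 := by positivity
    have h4 : 0 < -(1 * Real.sinh (x / 2) - x * (Real.cosh (x / 2) * (1 / 2))) := by linarith
    calc (0:ℝ) < -(1 * Real.sinh (x / 2) - x * (Real.cosh (x / 2) * (1 / 2))) / Real.sinh (x / 2) ^ 2 := div_pos h4 h2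
      _ = -((1 * Real.sinh (x / 2) - x * (Real.cosh (x / 2) * (1 / 2))) / Real.sinh (x / 2) ^ 2) := by ring

/-- `D(Λ,·)` is monotonically nondecreasing on `(0,∞)` and satisfies
`0 < D(Λ,Q) < 2/Λ²` for all `Q > 0`. -/
theorem quantLaplaceDist_monotone_and_bounded (Λ : ℝ) (hΛ : 0 < Λ) :
    MonotoneOn (fun Q => quantLaplaceDist Λ Q) (Set.Ioi 0) ∧
      ∀ Q : ℝ, 0 < Q → 0 < quantLaplaceDist Λ Q ∧ quantLaplaceDist Λ Q < 2 / Λ ^ 2 := by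
  constructor
  · intro a ha b hb hab
    simp only [Set.mem_Ioi] at ha hb
    show quantLaplaceDist Λ a ≤ quantLaplaceDist Λ b
    rw [quantLaplaceDist_eq Λ a hΛ ha, quantLaplaceDist_eq Λ b hΛ hb]
    have hm := aux_strictMono.monotoneOn (Set.mem_Ioi.2 (mul_pos hΛ ha))
      (Set.mem_Ioi.2 (mul_pos hΛ hb)) (by nlinarith)
    exact (div_le_div_iff_of_pos_right (by positivity)).2 hm
  · intro Q hQ
    have hx : 0 < Λ * Q := mul_pos hΛ hQ
    have hs : 0 < Real.sinh (Λ * Q / 2) := Real.sinh_pos_iff.2 (half_pos hx)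
    have hlt : Λ * Q / 2 < Real.sinh (Λ * Q / 2) := Real.self_lt_sinh_iff.mpr (half_pos hx)
    rw [quantLaplaceDist_eq Λ Q hΛ hQ]
    constructor
    · apply div_pos ?_ (by positivity)
      rw [sub_pos, div_lt_iff₀ hs]
      nlinarith
    · rw [div_lt_div_iff₀ (by positivity) (by positivity)]
      have : 0 < Λ * Q / Real.sinh (Λ * Q / 2) := div_pos hx hs
      have h3 : 0 < Λ * Q / Real.sinh (Λ * Q / 2) * Λ ^ 2 := mul_pos this (by positivity)
      nlinarith
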